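/- The function γ ↦ min_{q_{Y|X} : V(q_X^γ · q_{Y|X}, p_{XY}) ≤ ε} I(q_X^γ · q_{Y|X}) (with q_X^γ = (p_X(1)+γ, p_X(2)−γ)) need not be convex in γ: there exists a binary-binary joint distribution p_{XY} and ε ∈ (0,2) for which this function is neither convex nor concave on its domain. -/

import Mathlib

open Finset

/-- `p` is a probability mass function on a finite type. -/
def IsPMF {α : Type*} [Fintype α] (p : α → ℝ) : Prop :=
  (∀ a, 0 ≤ p a) ∧ ∑ a, p a = 1

/-- Variational (L¹) distance between two functions on a finite type. -/
def Vdist {α : Type*} [Fintype α] (p q : α → ℝ) : ℝ := ∑ a, |p a - q a|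

/-- `q` is a joint probability distribution (curried form). -/
def IsJointPMF {mx my : ℕ} (q : Fin mx → Fin my → ℝ) : Prop :=
  (∀ i j, 0 ≤ q i j) ∧ ∑ i, ∑ j, q i j = 1

/-- Variational (L¹) distance between two joint distributions. -/
def VdistJ {mx my : ℕ} (p q : Fin mx → Fin my → ℝ) : ℝ :=
  ∑ i, ∑ j, |p i j - q i j|

/-- Marginal distribution on X. -/
def margX {mx my : ℕ} (q : Fin mx → Fin my → ℝ) : Fin mx → ℝ := fun i => ∑ j, q i j

/-- Marginal distribution on Y. -/
def margY {mx my : ℕ} (q : Fin mx → Fin my → ℝ) : Fin my → ℝ := fun j => ∑ i, q i j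

/-- `w` is a conditional probability distribution of Y given X. -/
def IsCondDist {mx my : ℕ} (w : Fin mx → Fin my → ℝ) : Prop :=
  ∀ i, (∀ j, 0 ≤ w i j) ∧ ∑ j, w i j = 1

/-- Joint distribution induced by a marginal and a conditional distribution. -/
def jointOf {mx my : ℕ} (qX : Fin mx → ℝ) (w : Fin mx → Fin my → ℝ) :
    Fin mx → Fin my → ℝ := fun i j => qX i * w i j

/-- Mutual information of a joint distribution, with the convention 0·log 0 = 0. -/
noncomputable def mutualInfo {mx my : ℕ} (q : Fin mx → Fin my → ℝ) : ℝ :=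
  ∑ i, ∑ j, if q i j = 0 then 0 else q i j * Real.log (q i j / (margX q i * margY q j))

/-- Relative entropy (Kullback–Leibler divergence) with the convention 0·log(0/x) = 0. -/
noncomputable def relEntropy {α : Type*} [Fintype α] (p q : α → ℝ) : ℝ :=
  ∑ a, if p a = 0 then 0 else p a * Real.log (p a / q a)

/-! ### Auxiliary lemmas -/

lemma aux_log_bound {x m : ℝ} (hx : 0 < x) (hm : 0 < m) (hx1 : x ≤ 1) (hm1 : m ≤ 1) :
    (x - m)^2/4 ≤ x * Real.log (x/m) - x + m := by
  set a := Real.sqrt x with ha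
  set b := Real.sqrt m with hb
  have ha0 : 0 < a := Real.sqrt_pos.mpr hx
  have hb0 : 0 < b := Real.sqrt_pos.mpr hm
  have ha2 : a^2 = x := Real.sq_sqrt hx.le
  have hb2 : b^2 = m := Real.sq_sqrt hm.le
  have ha1 : a ≤ 1 := Real.sqrt_le_one.mpr hx1
  have hb1 : b ≤ 1 := Real.sqrt_le_one.mpr hm1
  have hlog : Real.log (b/a) ≤ b/a - 1 := Real.log_le_sub_one_of_pos (by positivity)
  have hlx : Real.log x = 2 * Real.log a := by
    rw [← ha2]; rw [Real.log_pow]; push_cast; ring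
  have hlm : Real.log m = 2 * Real.log b := by
    rw [← hb2]; rw [Real.log_pow]; push_cast; ring
  have hled : Real.log (x/m) = -2 * Real.log (b/a) := by
    rw [Real.log_div hx.ne' hm.ne', Real.log_div hb0.ne' ha0.ne', hlx, hlm]; ring
  have hkey : 2*a^2 - 2*a*b ≤ x * Real.log (x/m) := by
    rw [hled]
    have : x * (-2 * Real.log (b/a)) ≥ x * (-2*(b/a-1)) := by
      apply mul_le_mul_of_nonneg_left _ hx.le
      linarith
    have hq : x * (-2*(b/a-1)) = 2*a^2 - 2*a*b := by
      rw [← ha2]; field_simp; ring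
    linarith [this, hq.symm.le]
  have h4 : (a-b)^2 * (a+b)^2 ≤ (a-b)^2 * 4 := by
    apply mul_le_mul_of_nonneg_left _ (sq_nonneg _)
    nlinarith
  nlinarith [hkey, h4, sq_nonneg (a-b)]

lemma aux_cell_bound {x m : ℝ} (hx : 0 ≤ x) (hm : 0 ≤ m) (hx1 : x ≤ 1) (hm1 : m ≤ 1)
    (hpos : x ≠ 0 → 0 < m) :
    (x - m)^2/4 ≤ (if x = 0 then 0 else x * Real.log (x/m)) + m - x := by
  by_cases h : x = 0
  · subst h; simp; nlinarith
  · rw [if_neg h]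
    have := aux_log_bound (hx.lt_of_ne (Ne.symm h)) (hpos h) hx1 hm1
    linarith

lemma aux_mi_ge_det_sq (q : Fin 2 → Fin 2 → ℝ) (hq : ∀ i j, 0 ≤ q i j)
    (hsum : ∑ i, ∑ j, q i j = 1) :
    (q 0 0 * q 1 1 - q 0 1 * q 1 0)^2 ≤ mutualInfo q := by
  have hs : q 0 0 + q 0 1 + (q 1 0 + q 1 1) = 1 := by
    simpa [Fin.sum_univ_two] using hsum
  set x00 := q 0 0; set x01 := q 0 1; set x10 := q 1 0; set x11 := q 1 1
  have h00 := hq 0 0; have h01 := hq 0 1; have h10 := hq 1 0; have h11 := hq 1 1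
  have hmx0 : margX q 0 = x00 + x01 := by simp [margX, Fin.sum_univ_two]; rfl
  have hmx1 : margX q 1 = x10 + x11 := by simp [margX, Fin.sum_univ_two]; rfl
  have hmy0 : margY q 0 = x00 + x10 := by simp [margY, Fin.sum_univ_two]; rfl
  have hmy1 : margY q 1 = x01 + x11 := by simp [margY, Fin.sum_univ_two]; rfl
  have hMI : mutualInfo q =
      (if x00 = 0 then 0 else x00 * Real.log (x00 / ((x00+x01)*(x00+x10))))
    + (if x01 = 0 then 0 else x01 * Real.log (x01 / ((x00+x01)*(x01+x11))))
    + (if x10 = 0 then 0 else x10 * Real.log (x10 / ((x10+x11)*(x00+x10))))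
    + (if x11 = 0 then 0 else x11 * Real.log (x11 / ((x10+x11)*(x01+x11)))) := by
    simp only [mutualInfo, Fin.sum_univ_two, hmx0, hmx1, hmy0, hmy1]; ring
  have c00 := aux_cell_bound h00 (by positivity : (0:ℝ) ≤ (x00+x01)*(x00+x10))
    (by linarith) (by nlinarith) (fun h => by
      have : 0 < x00 := h00.lt_of_ne (Ne.symm h)
      positivity)
  have c01 := aux_cell_bound h01 (by positivity : (0:ℝ) ≤ (x00+x01)*(x01+x11))
    (by linarith) (by nlinarith) (fun h => by
      have : 0 < x01 := h01.lt_of_ne (Ne.symm h)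
      positivity)
  have c10 := aux_cell_bound h10 (by positivity : (0:ℝ) ≤ (x10+x11)*(x00+x10))
    (by linarith) (by nlinarith) (fun h => by
      have : 0 < x10 := h10.lt_of_ne (Ne.symm h)
      positivity)
  have c11 := aux_cell_bound h11 (by positivity : (0:ℝ) ≤ (x10+x11)*(x01+x11))
    (by linarith) (by nlinarith) (fun h => by
      have : 0 < x11 := h11.lt_of_ne (Ne.symm h)
      positivity)
  have e00 : x00 - (x00+x01)*(x00+x10) = x00*x11 - x01*x10 := by
    linear_combination (-x00) * hs
  have e01 : x01 - (x00+x01)*(x01+x11) = -(x00*x11 - x01*x10) := by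
    linear_combination (-x01) * hs
  have e10 : x10 - (x10+x11)*(x00+x10) = -(x00*x11 - x01*x10) := by
    linear_combination (-x10) * hs
  have e11 : x11 - (x10+x11)*(x01+x11) = x00*x11 - x01*x10 := by
    linear_combination (-x11) * hs
  rw [e00] at c00
  rw [e01] at c01
  rw [e10] at c10
  rw [e11] at c11
  rw [hMI]
  linarith [c00, c01, c10, c11, e00, e01, e10, e11]

lemma aux_mutualInfo_prod (u r : Fin 2 → ℝ) (hu : u 0 + u 1 = 1) (hr : r 0 + r 1 = 1) :
    mutualInfo (fun i j => u i * r j) = 0 := by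
  have hmx : ∀ i, margX (fun i j => u i * r j) i = u i := by
    intro i; simp [margX, Fin.sum_univ_two, ← mul_add, hr]
  have hmy : ∀ j, margY (fun i j => u i * r j) j = r j := by
    intro j; simp [margY, Fin.sum_univ_two, ← add_mul, hu]
  have key : ∀ (i : Fin 2) (j : Fin 2),
      (if u i * r j = 0 then (0:ℝ) else u i * r j * Real.log (u i * r j / (u i * r j))) = 0 := by
    intro i j
    by_cases h : u i * r j = 0
    · simp [h]
    · rw [if_neg h, div_self h, Real.log_one, mul_zero]
  simp only [mutualInfo, Fin.sum_univ_two]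
  rw [hmx, hmx, hmy, hmy]
  rw [key 0 0, key 0 1, key 1 0, key 1 1]
  ring

/-- the witness joint distribution -/
noncomputable def pW : Fin 2 → Fin 2 → ℝ := ![![1/20, 9/20], ![9/20, 1/20]]

lemma aux_joint_sum (u : Fin 2 → ℝ) (hsum : u 0 + u 1 = 1)
    (w : Fin 2 → Fin 2 → ℝ) (hw : IsCondDist w) :
    ∑ i, ∑ j, jointOf u w i j = 1 := by
  have hw0 := (hw 0).2
  have hw1 := (hw 1).2
  simp only [Fin.sum_univ_two] at hw0 hw1
  simp only [jointOf, Fin.sum_univ_two, ← mul_add, hw0, hw1, mul_one]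
  exact hsum

lemma aux_mi_nonneg (u : Fin 2 → ℝ) (h0 : 0 ≤ u 0) (h1 : 0 ≤ u 1) (hsum : u 0 + u 1 = 1)
    (w : Fin 2 → Fin 2 → ℝ) (hw : IsCondDist w) :
    0 ≤ mutualInfo (jointOf u w) := by
  refine le_trans (sq_nonneg _) (aux_mi_ge_det_sq _ ?_ (aux_joint_sum u hsum w hw))
  intro i j
  exact mul_nonneg (by fin_cases i <;> assumption) ((hw i).1 j)

/-- when a feasible product exists, the slice minimum is 0 -/
lemma aux_fval_zero (u : Fin 2 → ℝ) (h0 : 0 ≤ u 0) (h1 : 0 ≤ u 1) (hsum : u 0 + u 1 = 1)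
    (r : Fin 2 → ℝ) (hr0 : 0 ≤ r 0) (hr1 : 0 ≤ r 1) (hrs : r 0 + r 1 = 1)
    (hV : VdistJ (jointOf u (fun _ => r)) pW ≤ 3/4) :
    sInf {x : ℝ | ∃ w : Fin 2 → Fin 2 → ℝ, IsCondDist w ∧
        VdistJ (jointOf u w) pW ≤ 3/4 ∧ x = mutualInfo (jointOf u w)} = 0 := by
  have hcond : IsCondDist (fun _ : Fin 2 => r) := by
    intro i
    exact ⟨fun j => by fin_cases j <;> assumption, by simpa [Fin.sum_univ_two] using hrs⟩
  have hmi : mutualInfo (jointOf u (fun _ => r)) = 0 := aux_mutualInfo_prod u r hsum hrs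
  have hmem : (0:ℝ) ∈ {x : ℝ | ∃ w : Fin 2 → Fin 2 → ℝ, IsCondDist w ∧
      VdistJ (jointOf u w) pW ≤ 3/4 ∧ x = mutualInfo (jointOf u w)} :=
    ⟨fun _ => r, hcond, hV, hmi.symm⟩
  have hlb : ∀ x ∈ {x : ℝ | ∃ w : Fin 2 → Fin 2 → ℝ, IsCondDist w ∧
      VdistJ (jointOf u w) pW ≤ 3/4 ∧ x = mutualInfo (jointOf u w)}, (0:ℝ) ≤ x := by
    rintro x ⟨w, hw, hVw, rfl⟩
    exact aux_mi_nonneg u h0 h1 hsum w hw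
  exact le_antisymm (csInf_le ⟨0, hlb⟩ hmem) (le_csInf ⟨0, hmem⟩ hlb)

/-- at the middle slice the minimum is at least 1/6400 -/
lemma aux_fval_lb (u : Fin 2 → ℝ) (h0 : u 0 = 1/2) (h1 : u 1 = 1/2) :
    1/6400 ≤ sInf {x : ℝ | ∃ w : Fin 2 → Fin 2 → ℝ, IsCondDist w ∧
        VdistJ (jointOf u w) pW ≤ 3/4 ∧ x = mutualInfo (jointOf u w)} := by
  have hcond0 : IsCondDist (![![1/10, 9/10], ![9/10, 1/10]] : Fin 2 → Fin 2 → ℝ) := by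
    intro i; fin_cases i <;>
      exact ⟨fun j => by fin_cases j <;> norm_num, by norm_num [Fin.sum_univ_two]⟩
  have hV0 : VdistJ (jointOf u (![![1/10, 9/10], ![9/10, 1/10]] : Fin 2 → Fin 2 → ℝ)) pW
      ≤ 3/4 := by
    simp only [VdistJ, jointOf, Fin.sum_univ_two, pW, h0, h1]
    norm_num [abs]
  apply le_csInf
  · exact ⟨_, ![![1/10, 9/10], ![9/10, 1/10]], hcond0, hV0, rfl⟩
  · rintro x ⟨w, hw, hVw, rfl⟩
    set a := w 0 0 with hadef
    set c := w 1 0 with hcdef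
    have ha1 : w 0 1 = 1 - a := by
      have := (hw 0).2; simp [Fin.sum_univ_two] at this; linarith
    have hc1 : w 1 1 = 1 - c := by
      have := (hw 1).2; simp [Fin.sum_univ_two] at this; linarith
    have ha0 : 0 ≤ a := (hw 0).1 0
    have hc0 : 0 ≤ c := (hw 1).1 0
    have ha0' : 0 ≤ (1:ℝ) - a := by rw [← ha1]; exact (hw 0).1 1
    have hc0' : 0 ≤ (1:ℝ) - c := by rw [← hc1]; exact (hw 1).1 1
    have hVexp : |1/2*a - 1/20| + |1/2*(1-a) - 9/20| + (|1/2*c - 9/20| + |1/2*(1-c) - 1/20|)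
        ≤ 3/4 := by
      simpa [VdistJ, jointOf, Fin.sum_univ_two, pW, h0, h1, ha1, hc1] using hVw
    have habs1 : |1/2*(1-a) - 9/20| = |1/2*a - 1/20| := by
      rw [show (1:ℝ)/2*(1-a) - 9/20 = -(1/2*a - 1/20) by ring, abs_neg]
    have habs2 : |1/2*(1-c) - 1/20| = |1/2*c - 9/20| := by
      rw [show (1:ℝ)/2*(1-c) - 1/20 = -(1/2*c - 9/20) by ring, abs_neg]
    rw [habs1, habs2] at hVexp
    have hA := le_abs_self ((1:ℝ)/2*a - 1/20)
    have hC := neg_abs_le ((1:ℝ)/2*c - 9/20)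
    -- det ≤ -1/80
    have hdet : jointOf u w 0 0 * jointOf u w 1 1 - jointOf u w 0 1 * jointOf u w 1 0
        = (a - c)/4 := by
      simp only [jointOf, h0, h1, ha1, hc1]; ring
    have hac : a - c ≤ -1/20 := by linarith
    have hdetle : jointOf u w 0 0 * jointOf u w 1 1 - jointOf u w 0 1 * jointOf u w 1 0
        ≤ -1/80 := by rw [hdet]; linarith
    have hsq : (1:ℝ)/6400 ≤ (jointOf u w 0 0 * jointOf u w 1 1
        - jointOf u w 0 1 * jointOf u w 1 0)^2 := by nlinarith
    refine hsq.trans (aux_mi_ge_det_sq _ ?_ ?_)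
    · intro i j
      refine mul_nonneg ?_ ((hw i).1 j)
      fin_cases i <;> simp [h0, h1]
    · exact aux_joint_sum u (by rw [h0, h1]; norm_num) w hw


lemma aux_main (F : ℝ → ℝ) (s : Set ℝ)
    (hmA : (-1/4 : ℝ) ∈ s) (hmB : (-1/10 : ℝ) ∈ s) (hmC : (0 : ℝ) ∈ s) (hmD : (1/10 : ℝ) ∈ s)
    (hA : F (-1/4) = 0) (hB : F (-1/10) = 0) (hD : F (1/10) = 0)
    (hC : 1/6400 ≤ F 0) :
    ¬ ConvexOn ℝ s F ∧ ¬ ConcaveOn ℝ s F := by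
  constructor
  · intro h
    have h2 := h.2 hmB hmD (by norm_num : (0:ℝ) ≤ 1/2) (by norm_num : (0:ℝ) ≤ 1/2)
      (by norm_num : (1:ℝ)/2 + 1/2 = 1)
    rw [show ((1:ℝ)/2) • (-1/10 : ℝ) + ((1:ℝ)/2) • (1/10 : ℝ) = 0 by norm_num, hB, hD] at h2
    simp only [smul_eq_mul] at h2
    linarith
  · intro h
    have h2 := h.2 hmA hmC (by norm_num : (0:ℝ) ≤ 2/5) (by norm_num : (0:ℝ) ≤ 3/5)
      (by norm_num : (2:ℝ)/5 + 3/5 = 1)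
    rw [show ((2:ℝ)/5) • (-1/4 : ℝ) + ((3:ℝ)/5) • (0 : ℝ) = -1/10 by norm_num, hA, hB] at h2
    simp only [smul_eq_mul] at h2
    linarith


/-- The function γ ↦ min over the conditional feasible set of the mutual
information need not be convex: there is a binary-binary p and ε ∈ (0,2) for which it is
neither convex nor concave on its domain. -/
theorem slice_min_not_convex_not_concave :
    ∃ (p : Fin 2 → Fin 2 → ℝ) (ε : ℝ), IsJointPMF p ∧ ε ∈ Set.Ioo (0 : ℝ) 2 ∧
      ¬ ConvexOn ℝ
          {γ : ℝ | IsPMF (fun i : Fin 2 => if i = 0 then margX p 0 + γ else margX p 1 - γ) ∧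
            ∃ w : Fin 2 → Fin 2 → ℝ, IsCondDist w ∧
              VdistJ (jointOf (fun i => if i = 0 then margX p 0 + γ else margX p 1 - γ) w) p ≤ ε}
          (fun γ => sInf {x : ℝ | ∃ w : Fin 2 → Fin 2 → ℝ, IsCondDist w ∧
            VdistJ (jointOf (fun i => if i = 0 then margX p 0 + γ else margX p 1 - γ) w) p ≤ ε ∧
            x = mutualInfo (jointOf (fun i => if i = 0 then margX p 0 + γ else margX p 1 - γ) w)}) ∧
      ¬ ConcaveOn ℝ
          {γ : ℝ | IsPMF (fun i : Fin 2 => if i = 0 then margX p 0 + γ else margX p 1 - γ) ∧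
            ∃ w : Fin 2 → Fin 2 → ℝ, IsCondDist w ∧
              VdistJ (jointOf (fun i => if i = 0 then margX p 0 + γ else margX p 1 - γ) w) p ≤ ε}
          (fun γ => sInf {x : ℝ | ∃ w : Fin 2 → Fin 2 → ℝ, IsCondDist w ∧
            VdistJ (jointOf (fun i => if i = 0 then margX p 0 + γ else margX p 1 - γ) w) p ≤ ε ∧
            x = mutualInfo (jointOf (fun i => if i = 0 then margX p 0 + γ else margX p 1 - γ) w)}) := by
  have hfin : (1:Fin 2) ≠ 0 := by decide
  have hrA : IsCondDist (fun _ : Fin 2 => (![3/4, 1/4] : Fin 2 → ℝ)) := fun i =>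
    ⟨fun j => by fin_cases j <;> norm_num, by norm_num [Fin.sum_univ_two]⟩
  have hrB : IsCondDist (fun _ : Fin 2 => (![1/4, 3/4] : Fin 2 → ℝ)) := fun i =>
    ⟨fun j => by fin_cases j <;> norm_num, by norm_num [Fin.sum_univ_two]⟩
  have hrC : IsCondDist (fun _ : Fin 2 => (![3/5, 2/5] : Fin 2 → ℝ)) := fun i =>
    ⟨fun j => by fin_cases j <;> norm_num, by norm_num [Fin.sum_univ_two]⟩
  have hr0 : IsCondDist (![![1/10, 9/10], ![9/10, 1/10]] : Fin 2 → Fin 2 → ℝ) := by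
    intro i; fin_cases i <;>
      exact ⟨fun j => by fin_cases j <;> norm_num, by norm_num [Fin.sum_univ_two]⟩
  -- memberships in the domain set
  have memC : (-1/4 : ℝ) ∈ {γ : ℝ | IsPMF (fun i : Fin 2 => if i = 0 then margX pW 0 + γ else margX pW 1 - γ) ∧
      ∃ w : Fin 2 → Fin 2 → ℝ, IsCondDist w ∧
        VdistJ (jointOf (fun i => if i = 0 then margX pW 0 + γ else margX pW 1 - γ) w) pW ≤ 3/4} := by
    refine ⟨⟨fun i => by fin_cases i <;> norm_num [margX, pW, Fin.sum_univ_two, hfin],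
      by norm_num [margX, pW, Fin.sum_univ_two, hfin]⟩, fun _ => ![3/5, 2/5], hrC, ?_⟩
    norm_num [VdistJ, jointOf, margX, pW, Fin.sum_univ_two, hfin, abs]
  have memA : (-1/10 : ℝ) ∈ {γ : ℝ | IsPMF (fun i : Fin 2 => if i = 0 then margX pW 0 + γ else margX pW 1 - γ) ∧
      ∃ w : Fin 2 → Fin 2 → ℝ, IsCondDist w ∧
        VdistJ (jointOf (fun i => if i = 0 then margX pW 0 + γ else margX pW 1 - γ) w) pW ≤ 3/4} := by
    refine ⟨⟨fun i => by fin_cases i <;> norm_num [margX, pW, Fin.sum_univ_two, hfin],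
      by norm_num [margX, pW, Fin.sum_univ_two, hfin]⟩, fun _ => ![3/4, 1/4], hrA, ?_⟩
    norm_num [VdistJ, jointOf, margX, pW, Fin.sum_univ_two, hfin, abs]
  have memB : (1/10 : ℝ) ∈ {γ : ℝ | IsPMF (fun i : Fin 2 => if i = 0 then margX pW 0 + γ else margX pW 1 - γ) ∧
      ∃ w : Fin 2 → Fin 2 → ℝ, IsCondDist w ∧
        VdistJ (jointOf (fun i => if i = 0 then margX pW 0 + γ else margX pW 1 - γ) w) pW ≤ 3/4} := by
    refine ⟨⟨fun i => by fin_cases i <;> norm_num [margX, pW, Fin.sum_univ_two, hfin],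
      by norm_num [margX, pW, Fin.sum_univ_two, hfin]⟩, fun _ => ![1/4, 3/4], hrB, ?_⟩
    norm_num [VdistJ, jointOf, margX, pW, Fin.sum_univ_two, hfin, abs]
  have mem0 : (0 : ℝ) ∈ {γ : ℝ | IsPMF (fun i : Fin 2 => if i = 0 then margX pW 0 + γ else margX pW 1 - γ) ∧
      ∃ w : Fin 2 → Fin 2 → ℝ, IsCondDist w ∧
        VdistJ (jointOf (fun i => if i = 0 then margX pW 0 + γ else margX pW 1 - γ) w) pW ≤ 3/4} := by
    refine ⟨⟨fun i => by fin_cases i <;> norm_num [margX, pW, Fin.sum_univ_two, hfin],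
      by norm_num [margX, pW, Fin.sum_univ_two, hfin]⟩, ![![1/10, 9/10], ![9/10, 1/10]], hr0, ?_⟩
    norm_num [VdistJ, jointOf, margX, pW, Fin.sum_univ_two, hfin, abs]
  -- values
  have vC : sInf {x : ℝ | ∃ w : Fin 2 → Fin 2 → ℝ, IsCondDist w ∧
      VdistJ (jointOf (fun i : Fin 2 => if i = 0 then margX pW 0 + (-1/4 : ℝ) else margX pW 1 - (-1/4 : ℝ)) w) pW ≤ 3/4 ∧
      x = mutualInfo (jointOf (fun i : Fin 2 => if i = 0 then margX pW 0 + (-1/4 : ℝ) else margX pW 1 - (-1/4 : ℝ)) w)} = 0 := by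
    refine aux_fval_zero _ (by norm_num [margX, pW, Fin.sum_univ_two, hfin])
      (by norm_num [margX, pW, Fin.sum_univ_two, hfin])
      (by norm_num [margX, pW, Fin.sum_univ_two, hfin])
      ![3/5, 2/5] (by norm_num) (by norm_num) (by norm_num) ?_
    norm_num [VdistJ, jointOf, margX, pW, Fin.sum_univ_two, hfin, abs]
  have vA : sInf {x : ℝ | ∃ w : Fin 2 → Fin 2 → ℝ, IsCondDist w ∧
      VdistJ (jointOf (fun i : Fin 2 => if i = 0 then margX pW 0 + (-1/10 : ℝ) else margX pW 1 - (-1/10 : ℝ)) w) pW ≤ 3/4 ∧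
      x = mutualInfo (jointOf (fun i : Fin 2 => if i = 0 then margX pW 0 + (-1/10 : ℝ) else margX pW 1 - (-1/10 : ℝ)) w)} = 0 := by
    refine aux_fval_zero _ (by norm_num [margX, pW, Fin.sum_univ_two, hfin])
      (by norm_num [margX, pW, Fin.sum_univ_two, hfin])
      (by norm_num [margX, pW, Fin.sum_univ_two, hfin])
      ![3/4, 1/4] (by norm_num) (by norm_num) (by norm_num) ?_
    norm_num [VdistJ, jointOf, margX, pW, Fin.sum_univ_two, hfin, abs]
  have vB : sInf {x : ℝ | ∃ w : Fin 2 → Fin 2 → ℝ, IsCondDist w ∧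
      VdistJ (jointOf (fun i : Fin 2 => if i = 0 then margX pW 0 + (1/10 : ℝ) else margX pW 1 - (1/10 : ℝ)) w) pW ≤ 3/4 ∧
      x = mutualInfo (jointOf (fun i : Fin 2 => if i = 0 then margX pW 0 + (1/10 : ℝ) else margX pW 1 - (1/10 : ℝ)) w)} = 0 := by
    refine aux_fval_zero _ (by norm_num [margX, pW, Fin.sum_univ_two, hfin])
      (by norm_num [margX, pW, Fin.sum_univ_two, hfin])
      (by norm_num [margX, pW, Fin.sum_univ_two, hfin])
      ![1/4, 3/4] (by norm_num) (by norm_num) (by norm_num) ?_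
    norm_num [VdistJ, jointOf, margX, pW, Fin.sum_univ_two, hfin, abs]
  have v0 : (1:ℝ)/6400 ≤ sInf {x : ℝ | ∃ w : Fin 2 → Fin 2 → ℝ, IsCondDist w ∧
      VdistJ (jointOf (fun i : Fin 2 => if i = 0 then margX pW 0 + (0 : ℝ) else margX pW 1 - (0 : ℝ)) w) pW ≤ 3/4 ∧
      x = mutualInfo (jointOf (fun i : Fin 2 => if i = 0 then margX pW 0 + (0 : ℝ) else margX pW 1 - (0 : ℝ)) w)} :=
    aux_fval_lb _ (by norm_num [margX, pW, Fin.sum_univ_two, hfin])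
      (by norm_num [margX, pW, Fin.sum_univ_two, hfin])
  refine ⟨pW, 3/4, ⟨fun i j => by fin_cases i <;> fin_cases j <;> norm_num [pW],
    by norm_num [pW, Fin.sum_univ_two]⟩, ⟨by norm_num, by norm_num⟩, ?_, ?_⟩
  · refine (aux_main _ _ ?_ ?_ ?_ ?_ ?_ ?_ ?_ ?_).1
    · exact memC
    · exact memA
    · exact mem0
    · exact memB
    · exact vC
    · exact vA
    · exact vB
    · exact v0
  · refine (aux_main _ _ ?_ ?_ ?_ ?_ ?_ ?_ ?_ ?_).2
    · exact memC
    · exact memA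
    · exact mem0
    · exact memB
    · exact vC
    · exact vA
    · exact vB
    · exact v0
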